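/- Let m, n ≥ 1 and let A be an m×n matrix with real entries. Then exactly one of the following two statements holds: (1) there exists x ∈ ℝ^n such that for every i ∈ {1, …, m} the minimum min_{1≤j≤n} (A_{ij} + x_j) is attained for at least two distinct indices j; (2) there exists z ∈ ℝ^m such that for every j ∈ {1, …, n} the minimum min_{1≤i≤m} (A_{ij} + z_i) is attained for exactly one index i, and for any two distinct j, j′ ∈ {1, …, n} the unique minimizing indices are distinct. -/

import Mathlib

namespace TropDualProof

noncomputable section

variable {α : Type*}

/-- Sum of costs over consecutive pairs of a list ("open path"). -/
def pathSum (c : α → α → ℝ) : List α → ℝ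
  | [] => 0
  | [_] => 0
  | a :: b :: t => c a b + pathSum c (b :: t)

@[simp] lemma pathSum_nil (c : α → α → ℝ) : pathSum c [] = 0 := rfl
@[simp] lemma pathSum_single (c : α → α → ℝ) (a : α) : pathSum c [a] = 0 := rfl
@[simp] lemma pathSum_cons_cons (c : α → α → ℝ) (a b : α) (t : List α) :
    pathSum c (a :: b :: t) = c a b + pathSum c (b :: t) := rfl

/-- Cyclic sum: path sum of `l` with the closing arc back to the head. -/
def cycSum (c : α → α → ℝ) (l : List α) : ℝ := pathSum c (l ++ l.take 1)

lemma pathSum_concat (c : α → α → ℝ) :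
    ∀ (l : List α) (h : l ≠ []) (b : α),
      pathSum c (l ++ [b]) = pathSum c l + c (l.getLast h) b
  | [], h, _ => absurd rfl h
  | [a], _, b => by simp
  | a :: a' :: t, _, b => by
      have := pathSum_concat c (a' :: t) (List.cons_ne_nil _ _) b
      simp only [List.cons_append, pathSum_cons_cons] at *
      rw [this, List.getLast_cons (List.cons_ne_nil _ _)]
      ring

lemma cycSum_eq (c : α → α → ℝ) (l : List α) (h : l ≠ []) :
    cycSum c l = pathSum c l + c (l.getLast h) (l.head h) := by
  obtain ⟨a, t, rfl⟩ := List.exists_cons_of_ne_nil h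
  simp only [cycSum, List.take_succ_cons, List.take_zero, List.head_cons]
  exact pathSum_concat c (a :: t) h a

lemma pathSum_split (c : α → α → ℝ) :
    ∀ (xs : List α) (b : α) (ys : List α),
      pathSum c (xs ++ b :: ys) = pathSum c (xs ++ [b]) + pathSum c (b :: ys)
  | [], b, ys => by simp
  | [a], b, ys => by simp
  | a :: a' :: xs, b, ys => by
      have := pathSum_split c (a' :: xs) b ys
      simp only [List.cons_append, pathSum_cons_cons] at *
      rw [this]; ring

lemma pathSum_add (c d : α → α → ℝ) :
    ∀ l : List α, pathSum (fun a b => c a b + d a b) l = pathSum c l + pathSum d l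
  | [] => by simp
  | [_] => by simp
  | a :: b :: t => by
      have := pathSum_add c d (b :: t)
      simp only [pathSum_cons_cons] at *
      rw [this]; ring

lemma cycSum_add (c d : α → α → ℝ) (l : List α) :
    cycSum (fun a b => c a b + d a b) l = cycSum c l + cycSum d l :=
  pathSum_add c d _

lemma pathSum_telescope (f : α → ℝ) :
    ∀ (l : List α) (h : l ≠ []),
      pathSum (fun a b => f a - f b) l = f (l.head h) - f (l.getLast h)
  | [], h => absurd rfl h
  | [a], _ => by simp
  | a :: a' :: t, _ => by
      have := pathSum_telescope f (a' :: t) (List.cons_ne_nil _ _)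
      simp only [pathSum_cons_cons, List.head_cons] at *
      rw [this, List.getLast_cons (List.cons_ne_nil _ _)]
      ring

lemma cycSum_telescope (f : α → ℝ) (l : List α) :
    cycSum (fun a b => f a - f b) l = 0 := by
  rcases eq_or_ne l [] with rfl | h
  · simp [cycSum]
  · rw [cycSum_eq _ l h, pathSum_telescope f l h]; ring

lemma pathSum_sub_const (c : α → α → ℝ) (ε : ℝ) :
    ∀ (a : α) (t : List α),
      pathSum (fun a b => c a b - ε) (a :: t) = pathSum c (a :: t) - t.length * ε
  | _, [] => by simp
  | a, b :: t => by
      have := pathSum_sub_const c ε b t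
      simp only [pathSum_cons_cons, List.length_cons] at *
      rw [this]
      push_cast
      ring

lemma cycSum_sub_const (c : α → α → ℝ) (ε : ℝ) (l : List α) :
    cycSum (fun a b => c a b - ε) l = cycSum c l - l.length * ε := by
  rcases l with _ | ⟨a, t⟩
  · simp [cycSum]
  · have h : (a :: t) ++ (a :: t).take 1 = a :: (t ++ [a]) := by simp
    simp only [cycSum, h, pathSum_sub_const c ε a (t ++ [a]), List.length_append,
      List.length_cons]
    simp only [List.length_nil]

end

end TropDualProof

namespace TropDualProof

noncomputable section

/-- The finite set of all duplicate-free lists over `Fin n`. -/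
def allND (n : ℕ) : Finset (List (Fin n)) :=
  ((List.finRange n).sublists.flatMap List.permutations).toFinset

lemma mem_allND {n : ℕ} {l : List (Fin n)} : l ∈ allND n ↔ l.Nodup := by
  constructor
  · intro h
    rw [allND, List.mem_toFinset, List.mem_flatMap] at h
    obtain ⟨t, ht, hp⟩ := h
    exact (List.mem_permutations.1 hp).symm.nodup
      ((List.mem_sublists.1 ht).nodup (List.nodup_finRange n))
  · intro hl
    rw [allND, List.mem_toFinset, List.mem_flatMap]
    refine ⟨(List.finRange n).filter (· ∈ l), List.mem_sublists.2 List.filter_sublist, ?_⟩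
    rw [List.mem_permutations]
    apply List.perm_of_nodup_nodup_toFinset_eq hl ((List.nodup_finRange n).filter _)
    ext x
    simp [List.mem_filter, List.mem_finRange]

end

end TropDualProof

namespace TropDualProof

noncomputable section

/-- Existence of strict potentials when all simple cycles have strictly positive cost. -/
lemma exists_strict_potential {n : ℕ} (C : Fin n → Fin n → ℝ)
    (hcyc : ∀ l : List (Fin n), l.Nodup → 2 ≤ l.length → 0 < cycSum C l) :
    ∃ ζ : Fin n → ℝ, ∀ a b : Fin n, a ≠ b → ζ b - ζ a < C a b := by
  classical
  set W : Finset ℝ :=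
    insert 1 (((allND n).filter (fun l => 2 ≤ l.length)).image (cycSum C)) with hW
  have hWne : W.Nonempty := ⟨1, Finset.mem_insert_self _ _⟩
  have hWpos : ∀ w ∈ W, 0 < w := by
    intro w hw
    rcases Finset.mem_insert.1 hw with rfl | hw
    · norm_num
    · obtain ⟨l, hl, rfl⟩ := Finset.mem_image.1 hw
      obtain ⟨hnd, hlen⟩ := Finset.mem_filter.1 hl
      exact hcyc l (mem_allND.1 hnd) hlen
  set ε : ℝ := W.min' hWne / (n + 1) with hε
  have hεpos : 0 < ε := div_pos (hWpos _ (W.min'_mem hWne)) (by positivity)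
  set c : Fin n → Fin n → ℝ := fun a b => C a b - ε with hc
  have hcyc' : ∀ l : List (Fin n), l.Nodup → 2 ≤ l.length → 0 ≤ cycSum c l := by
    intro l hnd hlen
    have h1 : cycSum c l = cycSum C l - l.length * ε := cycSum_sub_const C ε l
    have h2 : (l.length : ℝ) ≤ n := by
      exact_mod_cast (hnd.length_le_card).trans_eq (by simp)
    have h3 : W.min' hWne ≤ cycSum C l := by
      apply Finset.min'_le
      exact Finset.mem_insert_of_mem (Finset.mem_image_of_mem _
        (Finset.mem_filter.2 ⟨mem_allND.2 hnd, hlen⟩))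
    have h4 : W.min' hWne = (n + 1) * ε := by
      rw [hε]; field_simp
    have h5 : (l.length : ℝ) * ε ≤ n * ε := by
      apply mul_le_mul_of_nonneg_right h2 hεpos.le
    rw [h1]
    nlinarith
  set P : Fin n → Finset ℝ :=
    fun b => ((allND n).filter (fun l => l.getLast? = some b)).image (pathSum c) with hP
  have hPne : ∀ b, (P b).Nonempty := by
    intro b
    refine ⟨pathSum c [b], Finset.mem_image_of_mem _ (Finset.mem_filter.2
      ⟨mem_allND.2 (List.nodup_singleton b), by simp⟩)⟩
  refine ⟨fun b => (P b).min' (hPne b), ?_⟩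
  intro a b hab
  have tri : (P b).min' (hPne b) ≤ (P a).min' (hPne a) + c a b := by
    obtain ⟨p, hp, hpv⟩ := Finset.mem_image.1 ((P a).min'_mem (hPne a))
    obtain ⟨hpnd', hplast'⟩ := Finset.mem_filter.1 hp
    have hpnd : p.Nodup := mem_allND.1 hpnd'
    have hpne : p ≠ [] := by
      intro h; rw [h] at hplast'; simp at hplast'
    have hlast : p.getLast hpne = a := by
      have h := List.getLast?_eq_getLast_of_ne_nil hpne
      rw [h] at hplast'
      exact Option.some_inj.1 hplast'
    by_cases hbp : b ∈ p
    · obtain ⟨s₀, t₀, hps⟩ := List.append_of_mem hbp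
      subst hps
      have hqsub : (s₀ ++ [b]).Sublist (s₀ ++ b :: t₀) :=
        List.Sublist.append_left ((List.nil_sublist t₀).cons₂ b) s₀
      have hqnd : (s₀ ++ [b]).Nodup := hpnd.sublist hqsub
      have h1 : (P b).min' (hPne b) ≤ pathSum c (s₀ ++ [b]) := by
        apply Finset.min'_le
        exact Finset.mem_image_of_mem _ (Finset.mem_filter.2
          ⟨mem_allND.2 hqnd, List.getLast?_concat⟩)
      have hsplit : pathSum c (s₀ ++ b :: t₀) =
          pathSum c (s₀ ++ [b]) + pathSum c (b :: t₀) := pathSum_split c s₀ b t₀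
      have ht₀ne : t₀ ≠ [] := by
        rintro rfl
        apply hab
        rw [← hlast]
        exact (List.getLast_append_of_right_ne_nil s₀ [b] (by simp)).symm ▸ rfl
      have hrne : (b :: t₀) ≠ [] := List.cons_ne_nil _ _
      have hrlast : (b :: t₀).getLast hrne = a := by
        rw [← hlast]
        exact (List.getLast_append_of_right_ne_nil s₀ (b :: t₀) hrne).symm
      have hrnd : (b :: t₀).Nodup := hpnd.sublist (List.sublist_append_right _ _)
      have hrlen : 2 ≤ (b :: t₀).length := by
        obtain ⟨u, t', rfl⟩ := List.exists_cons_of_ne_nil ht₀ne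
        simp [List.length_cons]
      have hrcyc := hcyc' (b :: t₀) hrnd hrlen
      rw [cycSum_eq c _ hrne, hrlast] at hrcyc
      simp only [List.head_cons] at hrcyc
      linarith [hpv ▸ hsplit]
    · have hqnd : (p ++ [b]).Nodup :=
        hpnd.append (List.nodup_singleton b)
          (fun x hx hxb => hbp (List.mem_singleton.1 hxb ▸ hx))
      have h1 : (P b).min' (hPne b) ≤ pathSum c (p ++ [b]) := by
        apply Finset.min'_le
        exact Finset.mem_image_of_mem _ (Finset.mem_filter.2
          ⟨mem_allND.2 hqnd, List.getLast?_concat⟩)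
      have h2 : pathSum c (p ++ [b]) = pathSum c p + c (p.getLast hpne) b :=
        pathSum_concat c p hpne b
      rw [hlast] at h2
      linarith [hpv ▸ h2]
  have : c a b = C a b - ε := rfl
  linarith

end

end TropDualProof

namespace TropDualProof

noncomputable section

variable {α : Type*}

lemma pathSum_take (c : α → α → ℝ) :
    ∀ (l : List α) (k : ℕ) (h : k + 1 < l.length),
      pathSum c (l.take (k + 2)) =
        pathSum c (l.take (k + 1)) + c (l[k]'(Nat.lt_of_succ_lt h)) (l[k + 1]'h)
  | [], k, h => by simp at h
  | [a], k, h => by simp at h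
  | a :: b :: t, 0, h => by simp
  | a :: b :: t, (k+1), h => by
      have hlen : k + 1 < (b :: t).length := by
        simpa [List.length_cons] using Nat.lt_of_succ_lt_succ h
      have ih := pathSum_take c (b :: t) k hlen
      have e1 : (a :: b :: t).take (k + 1 + 2) = a :: (b :: t).take (k + 2) := rfl
      have e2 : (a :: b :: t).take (k + 1 + 1) = a :: (b :: t).take (k + 1) := rfl
      have e3 : (b :: t).take (k + 2) = b :: t.take (k + 1) := rfl
      have e4 : (b :: t).take (k + 1) = b :: t.take k := rfl
      rw [e1, e2, e3, e4]
      rw [e3, e4] at ih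
      simp only [pathSum_cons_cons]
      rw [ih]
      have g1 : (a :: b :: t)[k + 1]'(Nat.lt_of_succ_lt h) = (b :: t)[k]'(Nat.lt_of_succ_lt hlen) := by
        simp
      have g2 : (a :: b :: t)[k + 1 + 1]'h = (b :: t)[k + 1]'hlen := by
        simp
      rw [g1, g2]
      ring

lemma pathSum_take_one (c : α → α → ℝ) (l : List α) : pathSum c (l.take 1) = 0 := by
  cases l <;> simp

lemma exists_cycle_potential [DecidableEq α] (c : α → α → ℝ) (l : List α)
    (hnd : l.Nodup) (hlen : 2 ≤ l.length) (hw : 0 ≤ cycSum c l) :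
    ∃ x : α → ℝ, ∀ j ∈ l, ∃ j', j' ∈ l ∧ j' ≠ j ∧ x j' - x j ≤ c j j' := by
  have hne : l ≠ [] := by rintro rfl; simp at hlen
  refine ⟨fun j => pathSum c (l.take (l.idxOf j + 1)), ?_⟩
  intro j hj
  have htlt : l.idxOf j < l.length := List.idxOf_lt_length_iff.2 hj
  have hjt : l[l.idxOf j]'htlt = j := List.getElem_idxOf htlt
  by_cases hcase : l.idxOf j + 1 < l.length
  · refine ⟨l[l.idxOf j + 1]'hcase, List.getElem_mem _, ?_, ?_⟩
    · intro hEq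
      have h1 : l.idxOf (l[l.idxOf j + 1]'hcase) = l.idxOf j + 1 :=
        List.Nodup.idxOf_getElem hnd _ _
      rw [hEq] at h1
      omega
    · have h1 : l.idxOf (l[l.idxOf j + 1]'hcase) = l.idxOf j + 1 :=
        List.Nodup.idxOf_getElem hnd _ _
      have h2 := pathSum_take c l (l.idxOf j) hcase
      rw [hjt] at h2
      simp only [h1]
      linarith
  · have htl : l.idxOf j + 1 = l.length := by omega
    have h0 : 0 < l.length := by omega
    refine ⟨l[0]'h0, List.getElem_mem _, ?_, ?_⟩
    · intro hEq
      have h1 : l.idxOf (l[0]'h0) = 0 := List.Nodup.idxOf_getElem hnd _ _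
      rw [hEq] at h1
      omega
    · have h1 : l.idxOf (l[0]'h0) = 0 := List.Nodup.idxOf_getElem hnd _ _
      simp only [h1]
      rw [pathSum_take_one]
      have h2 : l.take (l.idxOf j + 1) = l := by rw [htl]; exact List.take_length
      rw [h2]
      have h3 := cycSum_eq c l hne
      have h4 : l.getLast hne = j := by
        rw [List.getLast_eq_getElem hne]
        have : l.length - 1 = l.idxOf j := by omega
        simp only [this, hjt]
      have h5 : l.head hne = l[0]'h0 := List.head_eq_getElem hne
      rw [h4, h5] at h3
      rw [h3] at hw
      linarith

end

end TropDualProof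

namespace TropDualProof

noncomputable section

lemma base_case {m n : ℕ} (A : Fin m → Fin n → ℝ) (ρ : Fin n → Fin m)
    (l : List (Fin n)) (hnd : l.Nodup) (hlen : 2 ≤ l.length)
    (hw : 0 ≤ cycSum (fun a b => A (ρ a) a - A (ρ a) b) l) :
    ∃ x : Fin n → ℝ, ∀ j : Fin n, ∃ j', j' ≠ j ∧ A (ρ j) j' + x j' ≤ A (ρ j) j + x j := by
  classical
  obtain ⟨x₀, hx₀⟩ := exists_cycle_potential _ l hnd hlen hw
  have hne : l ≠ [] := by rintro rfl; simp at hlen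
  have hc₀mem : l.head hne ∈ l := List.head_mem hne
  refine ⟨fun j => if j ∈ l then x₀ j else
    A (ρ j) (l.head hne) + x₀ (l.head hne) - A (ρ j) j, ?_⟩
  intro j
  by_cases hj : j ∈ l
  · obtain ⟨j', hj'mem, hj'ne, hle⟩ := hx₀ j hj
    refine ⟨j', hj'ne, ?_⟩
    simp only [if_pos hj, if_pos hj'mem]
    linarith
  · refine ⟨l.head hne, fun h => hj (h ▸ hc₀mem), ?_⟩
    simp only [if_pos hc₀mem, if_neg hj]
    linarith

lemma main_dichotomy {m n : ℕ} (A : Fin m → Fin n → ℝ) :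
    ∀ (k : ℕ) (R : Fin n → Finset (Fin m)), (∀ j, (R j).Nonempty) →
      (∑ j, (R j).card = k) →
      (∃ σ : Fin n → Fin m, (∀ j, σ j ∈ R j) ∧
        ∀ l : List (Fin n), l.Nodup → 2 ≤ l.length →
          cycSum (fun a b => A (σ a) a - A (σ a) b) l < 0) ∨
      (∃ x : Fin n → ℝ, ∀ (j : Fin n), ∀ i ∈ R j,
        ∃ j', j' ≠ j ∧ A i j' + x j' ≤ A i j + x j) := by
  classical
  intro k
  induction k using Nat.strong_induction_on with
  | _ k IH =>
  intro R hne hsum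
  by_cases hbig : ∃ j₀, 1 < (R j₀).card
  · obtain ⟨j₀, hj₀⟩ := hbig
    obtain ⟨i₂, hi₂⟩ := hne j₀
    have hR1j₀ : Function.update R j₀ ((R j₀).erase i₂) j₀ = (R j₀).erase i₂ := by simp
    have hR2j₀ : Function.update R j₀ ({i₂} : Finset (Fin m)) j₀ = {i₂} := by simp
    have hR1j : ∀ j, j ≠ j₀ → Function.update R j₀ ((R j₀).erase i₂) j = R j := by
      intro j hj; simp [Function.update_of_ne hj]
    have hR2j : ∀ j, j ≠ j₀ → Function.update R j₀ ({i₂} : Finset (Fin m)) j = R j := by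
      intro j hj; simp [Function.update_of_ne hj]
    have hR1ne : ∀ j, (Function.update R j₀ ((R j₀).erase i₂) j).Nonempty := by
      intro j
      rcases eq_or_ne j j₀ with rfl | hj
      · rw [hR1j₀, ← Finset.card_pos, Finset.card_erase_of_mem hi₂]; omega
      · rw [hR1j j hj]; exact hne j
    have hR2ne : ∀ j, (Function.update R j₀ ({i₂} : Finset (Fin m)) j).Nonempty := by
      intro j
      rcases eq_or_ne j j₀ with rfl | hj
      · rw [hR2j₀]; exact ⟨i₂, Finset.mem_singleton_self _⟩
      · rw [hR2j j hj]; exact hne j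
    have hsum_split : ∀ X : Finset (Fin m),
        ∑ j, (Function.update R j₀ X j).card
          = X.card + ∑ j ∈ Finset.univ \ {j₀}, (R j).card := by
      intro X
      have e : (fun j => (Function.update R j₀ X j).card)
          = Function.update (fun j => (R j).card) j₀ X.card := by
        funext u
        by_cases hu : u = j₀
        · subst hu; simp
        · simp [Function.update_of_ne hu]
      calc ∑ j, (Function.update R j₀ X j).card
          = ∑ j, Function.update (fun j => (R j).card) j₀ X.card j := by rw [e]
        _ = X.card + ∑ j ∈ Finset.univ \ {j₀}, (R j).card :=
            Finset.sum_update_of_mem (Finset.mem_univ j₀) _ _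
    have hk_split : k = (R j₀).card + ∑ j ∈ Finset.univ \ {j₀}, (R j).card := by
      rw [← hsum]
      exact Finset.sum_eq_add_sum_sdiff_singleton_of_mem (Finset.mem_univ j₀) _
    have hk1 : ∑ j, (Function.update R j₀ ((R j₀).erase i₂) j).card < k := by
      rw [hsum_split ((R j₀).erase i₂), Finset.card_erase_of_mem hi₂]
      omega
    have hk2 : ∑ j, (Function.update R j₀ ({i₂} : Finset (Fin m)) j).card < k := by
      rw [hsum_split {i₂}, Finset.card_singleton]
      omega
    rcases IH _ hk1 (Function.update R j₀ ((R j₀).erase i₂)) hR1ne rfl with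
      ⟨σ, hσmem, hσcyc⟩ | ⟨x1, hx1⟩
    · refine Or.inl ⟨σ, ?_, hσcyc⟩
      intro j
      by_cases hj : j = j₀
      · rw [hj]
        have h := hσmem j₀
        rw [hR1j₀] at h
        exact Finset.mem_of_mem_erase h
      · have h := hσmem j
        rwa [hR1j j hj] at h
    rcases IH _ hk2 (Function.update R j₀ ({i₂} : Finset (Fin m))) hR2ne rfl with
      ⟨σ, hσmem, hσcyc⟩ | ⟨x2, hx2⟩
    · refine Or.inl ⟨σ, ?_, hσcyc⟩
      intro j
      by_cases hj : j = j₀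
      · rw [hj]
        have h := hσmem j₀
        rw [hR2j₀, Finset.mem_singleton] at h
        rw [h]; exact hi₂
      · have h := hσmem j
        rwa [hR2j j hj] at h
    -- combine the two potentials
    refine Or.inr ⟨fun j => min (x1 j) (x2 j + (x1 j₀ - x2 j₀)), ?_⟩
    intro j i hi
    have hmin0 : min (x1 j₀) (x2 j₀ + (x1 j₀ - x2 j₀)) = x1 j₀ := by
      have e : x2 j₀ + (x1 j₀ - x2 j₀) = x1 j₀ := by ring
      rw [e, min_self]
    by_cases hj : j = j₀
    · subst hj
      rcases eq_or_ne i i₂ with rfl | hii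
      · obtain ⟨j', hj'ne, hle⟩ := hx2 j i (by rw [hR2j₀]; exact Finset.mem_singleton_self _)
        refine ⟨j', hj'ne, ?_⟩
        show A i j' + min (x1 j') (x2 j' + (x1 j - x2 j))
          ≤ A i j + min (x1 j) (x2 j + (x1 j - x2 j))
        have h1 : min (x1 j') (x2 j' + (x1 j - x2 j)) ≤ x2 j' + (x1 j - x2 j) :=
          min_le_right _ _
        rw [hmin0]
        linarith
      · obtain ⟨j', hj'ne, hle⟩ := hx1 j i
          (by rw [hR1j₀]; exact Finset.mem_erase.2 ⟨hii, hi⟩)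
        refine ⟨j', hj'ne, ?_⟩
        show A i j' + min (x1 j') (x2 j' + (x1 j - x2 j))
          ≤ A i j + min (x1 j) (x2 j + (x1 j - x2 j))
        have h1 : min (x1 j') (x2 j' + (x1 j - x2 j)) ≤ x1 j' := min_le_left _ _
        rw [hmin0]
        linarith
    · rcases le_total (x1 j) (x2 j + (x1 j₀ - x2 j₀)) with hc | hc
      · obtain ⟨j', hj'ne, hle⟩ := hx1 j i (by rw [hR1j j hj]; exact hi)
        refine ⟨j', hj'ne, ?_⟩
        show A i j' + min (x1 j') (x2 j' + (x1 j₀ - x2 j₀))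
          ≤ A i j + min (x1 j) (x2 j + (x1 j₀ - x2 j₀))
        have h1 : min (x1 j') (x2 j' + (x1 j₀ - x2 j₀)) ≤ x1 j' := min_le_left _ _
        rw [min_eq_left hc]
        linarith
      · obtain ⟨j', hj'ne, hle⟩ := hx2 j i (by rw [hR2j j hj]; exact hi)
        refine ⟨j', hj'ne, ?_⟩
        show A i j' + min (x1 j') (x2 j' + (x1 j₀ - x2 j₀))
          ≤ A i j + min (x1 j) (x2 j + (x1 j₀ - x2 j₀))
        have h1 : min (x1 j') (x2 j' + (x1 j₀ - x2 j₀)) ≤ x2 j' + (x1 j₀ - x2 j₀) :=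
          min_le_right _ _
        rw [min_eq_right hc]
        linarith
  · push_neg at hbig
    have hcard : ∀ j, (R j).card = 1 :=
      fun j => le_antisymm (hbig j) (Finset.card_pos.2 (hne j))
    choose ρ hρ using fun j => Finset.card_eq_one.1 (hcard j)
    by_cases hcyc : ∀ l : List (Fin n), l.Nodup → 2 ≤ l.length →
        cycSum (fun a b => A (ρ a) a - A (ρ a) b) l < 0
    · exact Or.inl ⟨ρ, fun j => by rw [hρ j]; exact Finset.mem_singleton_self _, hcyc⟩
    · push_neg at hcyc
      obtain ⟨l, hnd, hlen, hge⟩ := hcyc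
      obtain ⟨x, hx⟩ := base_case A ρ l hnd hlen hge
      refine Or.inr ⟨x, ?_⟩
      intro j i hi
      rw [hρ j, Finset.mem_singleton] at hi
      subst hi
      exact hx j

end

end TropDualProof

namespace TropDualProof

section Main

variable {m n : ℕ}

lemma not_both (A : Fin m → Fin n → ℝ) (hm : 0 < m) (hn : 0 < n)
    (hP : ∃ x : Fin n → ℝ, ∀ i : Fin m, ∃ j₁ j₂ : Fin n, j₁ ≠ j₂ ∧
      A i j₁ + x j₁ = A i j₂ + x j₂ ∧ ∀ j : Fin n, A i j₁ + x j₁ ≤ A i j + x j)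
    (hQ : ∃ z : Fin m → ℝ,
      (∀ j : Fin n, ∃! i : Fin m, ∀ i' : Fin m, A i j + z i ≤ A i' j + z i') ∧
      (∀ j j' : Fin n, j ≠ j' → ∀ i : Fin m,
        (∀ i' : Fin m, A i j + z i ≤ A i' j + z i') →
        ¬ (∀ i' : Fin m, A i j' + z i ≤ A i' j' + z i'))) : False := by
  classical
  obtain ⟨x, hx⟩ := hP
  obtain ⟨z, _, hz2⟩ := hQ
  haveI : Nonempty (Fin m × Fin n) := ⟨(⟨0, hm⟩, ⟨0, hn⟩)⟩
  obtain ⟨p₀, -, hp₀⟩ := Finset.exists_min_image Finset.univ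
    (fun p : Fin m × Fin n => A p.1 p.2 + x p.2 + z p.1) Finset.univ_nonempty
  obtain ⟨j₁, j₂, hne, heq, hmin⟩ := hx p₀.1
  have key : ∀ jj : Fin n, (A p₀.1 jj + x jj = A p₀.1 j₁ + x j₁) →
      ∀ i' : Fin m, A p₀.1 jj + z p₀.1 ≤ A i' jj + z i' := by
    intro jj hjj i'
    have h0 := hmin p₀.2
    have h2 : A p₀.1 p₀.2 + x p₀.2 + z p₀.1 ≤ A i' jj + x jj + z i' :=
      hp₀ (i', jj) (Finset.mem_univ _)
    linarith
  exact hz2 j₁ j₂ hne p₀.1 (key j₁ rfl) (key j₂ heq.symm)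

end Main

end TropDualProof


open TropDualProof in
/-- **Tropical linear duality over ℝ** : for a real matrix `A`, exactly one of the
following holds: (1) there is `x ∈ ℝ^n` such that in every row `i` the minimum
`min_j (A_{ij} + x_j)` is attained for at least two distinct indices `j`;
(2) there is `z ∈ ℝ^m` such that in every column `j` the minimum `min_i (A_{ij} + z_i)`
is attained for exactly one index `i`, and the unique minimizing indices of distinct
columns are distinct. -/
theorem tropical_linear_duality_real (m n : ℕ) (hm : 0 < m) (hn : 0 < n)
    (A : Fin m → Fin n → ℝ) :
    Xor'
      (∃ x : Fin n → ℝ, ∀ i : Fin m,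
        ∃ j₁ j₂ : Fin n, j₁ ≠ j₂ ∧ A i j₁ + x j₁ = A i j₂ + x j₂ ∧
          ∀ j : Fin n, A i j₁ + x j₁ ≤ A i j + x j)
      (∃ z : Fin m → ℝ,
        (∀ j : Fin n, ∃! i : Fin m, ∀ i' : Fin m, A i j + z i ≤ A i' j + z i') ∧
        (∀ j j' : Fin n, j ≠ j' → ∀ i : Fin m,
          (∀ i' : Fin m, A i j + z i ≤ A i' j + z i') →
          ¬ (∀ i' : Fin m, A i j' + z i ≤ A i' j' + z i'))) := by
  classical
  haveI : Nonempty (Fin m) := ⟨⟨0, hm⟩⟩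
  haveI : Nonempty (Fin n) := ⟨⟨0, hn⟩⟩
  haveI : Nonempty (Fin n × Fin m) := ⟨(⟨0, hn⟩, ⟨0, hm⟩)⟩
  rcases main_dichotomy A (∑ j : Fin n, (Finset.univ : Finset (Fin m)).card)
      (fun _ => Finset.univ) (fun _ => Finset.univ_nonempty) rfl with
    ⟨σ, -, hσcyc⟩ | ⟨x, hx⟩
  · -- case Q
    have hinj : Function.Injective σ := by
      intro a b hab
      by_contra hne'
      have h := hσcyc [a, b] (by simp [hne']) (by simp)
      have e : cycSum (fun u v => A (σ u) u - A (σ u) v) [a, b]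
          = (A (σ a) a - A (σ a) b) + ((A (σ b) b - A (σ b) a) + 0) := by
        simp [cycSum]
      rw [e, hab] at h
      linarith
    set C : Fin n → Fin n → ℝ := fun a b => A (σ a) b - A (σ b) b with hC
    have hCcyc : ∀ l : List (Fin n), l.Nodup → 2 ≤ l.length → 0 < cycSum C l := by
      intro l hnd hlen
      have h1 := hσcyc l hnd hlen
      have h2 : cycSum (fun a b => C a b + (A (σ a) a - A (σ a) b)) l
          = cycSum C l + cycSum (fun a b => A (σ a) a - A (σ a) b) l := cycSum_add _ _ l
      have h3 : (fun a b => C a b + (A (σ a) a - A (σ a) b))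
          = fun a b => (fun j => A (σ j) j) a - (fun j => A (σ j) j) b := by
        funext u v; rw [hC]; ring
      rw [h3, cycSum_telescope] at h2
      linarith
    obtain ⟨ζ, hζ⟩ := exists_strict_potential C hCcyc
    have hHne : ((Finset.univ : Finset (Fin n × Fin m)).image
        (fun p : Fin n × Fin m => A (σ p.1) p.1 + ζ p.1 - A p.2 p.1)).Nonempty :=
      Finset.univ_nonempty.image _
    set HUGE : ℝ := 1 + (((Finset.univ : Finset (Fin n × Fin m))).image
        (fun p : Fin n × Fin m => A (σ p.1) p.1 + ζ p.1 - A p.2 p.1)).max' hHne with hH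
    set z : Fin m → ℝ := fun i => if h : ∃ j, σ j = i then ζ h.choose else HUGE with hz
    have hzσ : ∀ j, z (σ j) = ζ j := by
      intro j
      have hex : ∃ j', σ j' = σ j := ⟨j, rfl⟩
      rw [hz]
      simp only [dif_pos hex]
      congr 1
      exact hinj hex.choose_spec
    have key : ∀ (j : Fin n) (i : Fin m), i ≠ σ j →
        A (σ j) j + z (σ j) < A i j + z i := by
      intro j i hi
      by_cases hex : ∃ j', σ j' = i
      · obtain ⟨j', rfl⟩ := hex
        have hjj' : j' ≠ j := fun h => hi (by rw [h])
        have h := hζ j' j hjj'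
        have hCe : C j' j = A (σ j') j - A (σ j) j := rfl
        rw [hzσ j, hzσ j']
        rw [hCe] at h
        linarith
      · have hzi : z i = HUGE := by rw [hz]; simp only [dif_neg hex]
        rw [hzi, hzσ j]
        have hmem : A (σ j) j + ζ j - A i j ∈
            ((Finset.univ : Finset (Fin n × Fin m))).image
              (fun p : Fin n × Fin m => A (σ p.1) p.1 + ζ p.1 - A p.2 p.1) :=
          Finset.mem_image_of_mem _ (Finset.mem_univ (j, i))
        have hle := Finset.le_max' _ _ hmem
        rw [hH]
        linarith
    have hQ : ∃ z : Fin m → ℝ,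
        (∀ j : Fin n, ∃! i : Fin m, ∀ i' : Fin m, A i j + z i ≤ A i' j + z i') ∧
        (∀ j j' : Fin n, j ≠ j' → ∀ i : Fin m,
          (∀ i' : Fin m, A i j + z i ≤ A i' j + z i') →
          ¬ (∀ i' : Fin m, A i j' + z i ≤ A i' j' + z i')) := by
      refine ⟨z, ?_, ?_⟩
      · intro j
        refine ⟨σ j, ?_, ?_⟩
        · intro i'
          rcases eq_or_ne i' (σ j) with rfl | hne'
          · exact le_refl _
          · exact (key j i' hne').le
        · intro y hy
          by_contra hne'
          have h1 := key j y hne'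
          have h2 := hy (σ j)
          linarith
      · intro j j' hjj' i hij hij'
        have e1 : i = σ j := by
          by_contra hne'
          have h1 := key j i hne'
          have h2 := hij (σ j)
          linarith
        have e2 : i = σ j' := by
          by_contra hne'
          have h1 := key j' i hne'
          have h2 := hij' (σ j')
          linarith
        exact hjj' (hinj (e1.symm.trans e2))
    exact Or.inr ⟨hQ, fun hP => not_both A hm hn hP hQ⟩
  · -- case P
    have hP : ∃ x : Fin n → ℝ, ∀ i : Fin m,
        ∃ j₁ j₂ : Fin n, j₁ ≠ j₂ ∧ A i j₁ + x j₁ = A i j₂ + x j₂ ∧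
          ∀ j : Fin n, A i j₁ + x j₁ ≤ A i j + x j := by
      refine ⟨x, ?_⟩
      intro i
      obtain ⟨j₁, -, hmin⟩ := Finset.exists_min_image Finset.univ
        (fun j : Fin n => A i j + x j) Finset.univ_nonempty
      obtain ⟨j₂, hne₂, hle₂⟩ := hx j₁ i (Finset.mem_univ i)
      refine ⟨j₁, j₂, hne₂.symm, ?_, fun j => hmin j (Finset.mem_univ j)⟩
      exact le_antisymm (hmin j₂ (Finset.mem_univ j₂)) hle₂
    exact Or.inl ⟨hP, fun hQ => not_both A hm hn hP hQ⟩
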